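/- arXiv:2205.11313 — 2 statements merged into one kernel-verified Lean document; each statement's English description precedes it below -/
import Mathlib

section
/- (Lemma 5.4.) Under the setup of Algorithm 3 with true processing-time matrix t, predicted matrix t_hat, parameter gamma in [1, m], and prediction error eta >= 1 satisfying t(i,j) <= eta * t_hat(i,j) and t_hat(i,j) <= eta * t(i,j) for all i, j, the allocation a produced by Algorithm 3 under truthful bidding satisfies F(a, t) <= (1 + 2*gamma) * eta^2 * MS(t). -/
/-- The makespan of allocation `a` (jobs to machines) for the
processing-time matrix `t`: the largest total load of a machine. -/
noncomputable def mkspan {m n : ℕ} (a : Fin n → Fin m) (t : Fin m → Fin n → ℝ) : ℝ :=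
  sSup {x : ℝ | ∃ i : Fin m, x = ∑ j : Fin n, if a j = i then t i j else 0}

/-- The minimum makespan of the scheduling instance `t` over all allocations. -/
noncomputable def optMS {m n : ℕ} (t : Fin m → Fin n → ℝ) : ℝ :=
  sInf {x : ℝ | ∃ a : Fin n → Fin m, x = mkspan a t}

private def load {m n : ℕ} (b : Fin n → Fin m) (s : Fin m → Fin n → ℝ) (i : Fin m) : ℝ :=
  ∑ j : Fin n, if b j = i then s i j else 0

private lemma mkspan_eq {m n : ℕ} (b : Fin n → Fin m) (s : Fin m → Fin n → ℝ) :
    mkspan b s = sSup (Set.range (load b s)) := by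
  unfold mkspan load
  congr 1
  ext x
  exact ⟨fun ⟨i, h⟩ => ⟨i, h.symm⟩, fun ⟨i, h⟩ => ⟨i, h.symm⟩⟩

private lemma load_le_mkspan {m n : ℕ} (b : Fin n → Fin m) (s : Fin m → Fin n → ℝ) (i : Fin m) :
    load b s i ≤ mkspan b s := by
  rw [mkspan_eq]
  exact le_csSup (Set.finite_range _).bddAbove ⟨i, rfl⟩

private lemma mkspan_le {m n : ℕ} (hm : 0 < m) (b : Fin n → Fin m) (s : Fin m → Fin n → ℝ)
    {C : ℝ} (h : ∀ i, load b s i ≤ C) : mkspan b s ≤ C := by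
  rw [mkspan_eq]
  refine csSup_le ⟨load b s ⟨0, hm⟩, ⟨⟨0, hm⟩, rfl⟩⟩ ?_
  rintro x ⟨i, rfl⟩
  exact h i

/-- Lemma 5.4: under the setup of Algorithm 3 with prediction error `η`,
the allocation produced under truthful bidding has makespan at most
`(1 + 2γ)·η²·MS(t)`. -/
theorem scheduling_error_bound
    (m n : ℕ) (hm : 0 < m) (γ η : ℝ) (hγ1 : 1 ≤ γ) (hγm : γ ≤ m) (hη : 1 ≤ η)
    (t that : Fin m → Fin n → ℝ) (hthat : ∀ i j, 0 < that i j)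
    -- prediction-error bounds
    (herr1 : ∀ i j, t i j ≤ η * that i j) (herr2 : ∀ i j, that i j ≤ η * t i j)
    -- the rounded predicted matrix t̄
    (tbar : Fin m → Fin n → ℝ)
    (htbar : ∀ i j, tbar i j = min (that i j) ((m / γ) * ⨅ i' : Fin m, that i' j))
    -- ā is an optimal allocation for t̄
    (abar : Fin n → Fin m)
    (habar : ∀ a' : Fin n → Fin m, mkspan abar tbar ≤ mkspan a' tbar)
    -- the weight matrix of Algorithm 3
    (w : Fin m → Fin n → ℝ)
    -- greedy jobs: a machine l attaining the minimum predicted time gets weight γ/m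
    (hw_greedy : ∀ j : Fin n, tbar (abar j) j < that (abar j) j →
      ∃ l : Fin m, (∀ i, that l j ≤ that i j) ∧ w l j = γ / m ∧
        ∀ i, i ≠ l → w i j = 1)
    -- non-greedy jobs: machine ā(j) gets weight γ²/m²
    (hw_non : ∀ j : Fin n, ¬ tbar (abar j) j < that (abar j) j →
      w (abar j) j = γ ^ 2 / m ^ 2 ∧ ∀ i, i ≠ abar j → w i j = 1)
    -- under truthful bidding, each job goes to a machine minimizing the
    -- weighted processing time ...
    (a : Fin n → Fin m)
    (ha_min : ∀ (j : Fin n) (i : Fin m), w (a j) j * t (a j) j ≤ w i j * t i j)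
    -- ... with ties broken in favor of the machine whose weight is below 1
    (ha_tie : ∀ (j : Fin n) (i : Fin m), w i j < 1 →
      w i j * t i j ≤ w (a j) j * t (a j) j → a j = i) :
    mkspan a t ≤ (1 + 2 * γ) * η ^ 2 * optMS t := by
  classical
  have hm0 : (0:ℝ) < m := by exact_mod_cast hm
  have hγ0 : (0:ℝ) < γ := lt_of_lt_of_le one_pos hγ1
  have hη0 : (0:ℝ) < η := lt_of_lt_of_le one_pos hη
  have hmne : (m:ℝ) ≠ 0 := ne_of_gt hm0
  have hγne : γ ≠ 0 := ne_of_gt hγ0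
  have hcpos : (0:ℝ) < γ / m := div_pos hγ0 hm0
  have hc1 : γ / m ≤ 1 := (div_le_one hm0).mpr hγm
  have i0 : Fin m := ⟨0, hm⟩
  haveI : Nonempty (Fin m) := ⟨i0⟩
  have ht : ∀ i j, 0 < t i j := by
    intro i j
    have h1 := hthat i j
    have h2 := herr2 i j
    nlinarith
  have htbar_le : ∀ i j, tbar i j ≤ that i j := by
    intro i j; rw [htbar]; exact min_le_left _ _
  have htbar_pos : ∀ i j, 0 < tbar i j := by
    intro i j
    rw [htbar]
    refine lt_min (hthat i j) ?_
    obtain ⟨l, hl⟩ := Finite.exists_min (fun i' => that i' j)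
    have hI : (⨅ i' : Fin m, that i' j) = that l j :=
      le_antisymm (ciInf_le (Set.finite_range _).bddBelow l) (le_ciInf hl)
    rw [hI]
    exact mul_pos (div_pos hm0 hγ0) (hthat l j)
  -- key per-job bound
  have hjob : ∀ j : Fin n, (t (a j) j ≤ γ/m * η * tbar (abar j) j) ∨
      (a j = abar j ∧ t (a j) j ≤ η * tbar (abar j) j) := by
    intro j
    by_cases hg : tbar (abar j) j < that (abar j) j
    · -- greedy job
      left
      obtain ⟨l, hl, hwl, hwo⟩ := hw_greedy j hg
      have hI : (⨅ i' : Fin m, that i' j) = that l j :=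
        le_antisymm (ciInf_le (Set.finite_range _).bddBelow l) (le_ciInf hl)
      have hmin : tbar (abar j) j = min (that (abar j) j) ((m/γ) * that l j) := by
        rw [htbar (abar j) j, hI]
      have htb : tbar (abar j) j = (m/γ) * that l j := by
        rcases le_total (that (abar j) j) ((m/γ) * that l j) with h | h
        · rw [hmin, min_eq_left h] at hg
          exact absurd hg (lt_irrefl _)
        · rw [hmin, min_eq_right h]
      have hlt : that l j = γ/m * tbar (abar j) j := by
        rw [htb]
        field_simp
      by_cases hal : a j = l
      · rw [hal]
        calc t l j ≤ η * that l j := herr1 l j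
          _ = γ/m * η * tbar (abar j) j := by rw [hlt]; ring
      · have hw1 : w (a j) j = 1 := hwo _ hal
        have hmle := ha_min j l
        rw [hw1, one_mul, hwl] at hmle
        calc t (a j) j ≤ γ/m * t l j := hmle
          _ ≤ γ/m * (η * that l j) :=
              mul_le_mul_of_nonneg_left (herr1 l j) (le_of_lt hcpos)
          _ = (γ/m) * ((γ/m) * (η * tbar (abar j) j)) := by rw [hlt]; ring
          _ ≤ 1 * ((γ/m) * (η * tbar (abar j) j)) :=
              mul_le_mul_of_nonneg_right hc1
                (le_of_lt (mul_pos hcpos (mul_pos hη0 (htbar_pos (abar j) j))))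
          _ = γ/m * η * tbar (abar j) j := by ring
    · -- non-greedy job
      obtain ⟨hwk, hwo⟩ := hw_non j hg
      have heq : tbar (abar j) j = that (abar j) j :=
        le_antisymm (htbar_le (abar j) j) (not_lt.mp hg)
      by_cases hal : a j = abar j
      · right
        refine ⟨hal, ?_⟩
        rw [hal, heq]
        exact herr1 (abar j) j
      · left
        have hw1 : w (a j) j = 1 := hwo _ hal
        have hmle := ha_min j (abar j)
        rw [hw1, one_mul, hwk] at hmle
        have h2 : t (abar j) j ≤ η * tbar (abar j) j := by
          rw [heq]; exact herr1 (abar j) j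
        calc t (a j) j ≤ γ^2/m^2 * t (abar j) j := hmle
          _ ≤ γ^2/m^2 * (η * tbar (abar j) j) :=
              mul_le_mul_of_nonneg_left h2 (by positivity)
          _ = (γ/m) * ((γ/m) * (η * tbar (abar j) j)) := by
              field_simp
          _ ≤ 1 * ((γ/m) * (η * tbar (abar j) j)) :=
              mul_le_mul_of_nonneg_right hc1
                (le_of_lt (mul_pos hcpos (mul_pos hη0 (htbar_pos (abar j) j))))
          _ = γ/m * η * tbar (abar j) j := by ring
  -- the optimal makespan B of tbar
  set B := mkspan abar tbar with hBdef
  have hLB : ∀ i, load abar tbar i ≤ B := fun i => load_le_mkspan abar tbar i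
  have hB0 : 0 ≤ B := by
    refine le_trans ?_ (hLB i0)
    unfold load
    apply Finset.sum_nonneg
    intro j _
    by_cases h : abar j = i0 <;> simp [h, le_of_lt (htbar_pos i0 j)]
  have hsum : (∑ i, load abar tbar i) = ∑ j, tbar (abar j) j := by
    unfold load
    rw [Finset.sum_comm]
    apply Finset.sum_congr rfl
    intro j _
    simp [Finset.sum_ite_eq]
  have hsumB : (∑ j, tbar (abar j) j) ≤ m * B := by
    rw [← hsum]
    calc (∑ i, load abar tbar i) ≤ ∑ _i : Fin m, B := Finset.sum_le_sum fun i _ => hLB i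
      _ = m * B := by
        rw [Finset.sum_const, Finset.card_univ, Fintype.card_fin, nsmul_eq_mul]
  -- per-machine bound for the truthful allocation
  have hmachine : ∀ i, load a t i ≤ (1 + 2*γ) * η * B := by
    intro i
    have h1 : load a t i ≤
        (∑ j, if a j = i ∧ ¬ (t (a j) j ≤ γ/m * η * tbar (abar j) j)
            then η * tbar i j else 0)
        + ∑ j, if t (a j) j ≤ γ/m * η * tbar (abar j) j
            then γ/m * η * tbar (abar j) j else 0 := by
      rw [← Finset.sum_add_distrib]
      unfold load
      apply Finset.sum_le_sum
      intro j _
      by_cases hai : a j = i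
      · by_cases hp : t (a j) j ≤ γ/m * η * tbar (abar j) j
        · rw [if_pos hai, if_neg (by tauto), if_pos hp]
          rw [hai] at hp
          linarith
        · rcases hjob j with h | ⟨hab, hq⟩
          · exact absurd h hp
          · rw [if_pos hai, if_pos ⟨hai, hp⟩, if_neg hp]
            rw [hai] at hq hab
            rw [← hab] at hq
            linarith
      · rw [if_neg hai, if_neg (by tauto)]
        by_cases hp : t (a j) j ≤ γ/m * η * tbar (abar j) j
        · rw [if_pos hp]
          have := mul_pos (mul_pos hcpos hη0) (htbar_pos (abar j) j)
          linarith
        · rw [if_neg hp]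
          linarith
    have h2 : (∑ j, if a j = i ∧ ¬ (t (a j) j ≤ γ/m * η * tbar (abar j) j)
        then η * tbar i j else 0) ≤ η * load abar tbar i := by
      unfold load
      rw [Finset.mul_sum]
      apply Finset.sum_le_sum
      intro j _
      by_cases hc : a j = i ∧ ¬ (t (a j) j ≤ γ/m * η * tbar (abar j) j)
      · rw [if_pos hc]
        have habi : abar j = i := by
          rcases hjob j with h | ⟨hab, _⟩
          · exact absurd h hc.2
          · rw [← hab]; exact hc.1
        rw [if_pos habi]
      · rw [if_neg hc]
        by_cases habi : abar j = i
        · rw [if_pos habi]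
          exact mul_nonneg (le_of_lt hη0) (le_of_lt (htbar_pos i j))
        · rw [if_neg habi, mul_zero]
    have h3 : (∑ j, if t (a j) j ≤ γ/m * η * tbar (abar j) j
        then γ/m * η * tbar (abar j) j else 0) ≤ γ/m * η * ∑ j, tbar (abar j) j := by
      rw [Finset.mul_sum]
      apply Finset.sum_le_sum
      intro j _
      by_cases hp : t (a j) j ≤ γ/m * η * tbar (abar j) j
      · rw [if_pos hp]
      · rw [if_neg hp]
        exact le_of_lt (mul_pos (mul_pos hcpos hη0) (htbar_pos (abar j) j))
    have h4 : γ/m * η * (↑m * B) = γ * η * B := by field_simp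
    have h5 : γ/m * η * (∑ j, tbar (abar j) j) ≤ γ * η * B := by
      rw [← h4]
      exact mul_le_mul_of_nonneg_left hsumB (le_of_lt (mul_pos hcpos hη0))
    have h6 : η * load abar tbar i ≤ η * B :=
      mul_le_mul_of_nonneg_left (hLB i) (le_of_lt hη0)
    nlinarith [mul_nonneg (mul_nonneg (le_of_lt hγ0) (le_of_lt hη0)) hB0]
  have hfinal : mkspan a t ≤ (1 + 2*γ) * η * B := mkspan_le hm a t hmachine
  -- B ≤ η * optMS t
  obtain ⟨astar, hstar⟩ : ∃ astar : Fin n → Fin m, optMS t = mkspan astar t := by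
    have hfin : {x : ℝ | ∃ a' : Fin n → Fin m, x = mkspan a' t}.Finite := by
      refine (Set.finite_range (fun a' : Fin n → Fin m => mkspan a' t)).subset ?_
      rintro x ⟨a', rfl⟩
      exact ⟨a', rfl⟩
    have hne : {x : ℝ | ∃ a' : Fin n → Fin m, x = mkspan a' t}.Nonempty :=
      ⟨mkspan (fun _ => i0) t, fun _ => i0, rfl⟩
    rw [optMS]
    exact hne.csInf_mem hfin
  have hBopt : B ≤ η * optMS t := by
    rw [hstar]
    refine le_trans (habar astar) (mkspan_le hm astar tbar ?_)
    intro i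
    have hload : load astar tbar i ≤ η * load astar t i := by
      unfold load
      rw [Finset.mul_sum]
      apply Finset.sum_le_sum
      intro j _
      by_cases h : astar j = i
      · rw [if_pos h, if_pos h]
        exact le_trans (htbar_le i j) (herr2 i j)
      · rw [if_neg h, if_neg h, mul_zero]
    exact le_trans hload
      (mul_le_mul_of_nonneg_left (load_le_mkspan astar t i) (le_of_lt hη0))
  have hMS0 : 0 ≤ optMS t := by
    rw [hstar]
    refine le_trans ?_ (load_le_mkspan astar t i0)
    unfold load
    apply Finset.sum_nonneg
    intro j _
    by_cases h : astar j = i0 <;> simp [h, le_of_lt (ht i0 j)]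
  have h7 : (1 + 2*γ) * η * B ≤ (1 + 2*γ) * η * (η * optMS t) :=
    mul_le_mul_of_nonneg_left hBopt (by nlinarith)
  calc mkspan a t ≤ (1 + 2*γ) * η * B := hfinal
    _ ≤ (1 + 2*γ) * η * (η * optMS t) := h7
    _ = (1 + 2*γ) * η^2 * optMS t := by ring
end

section
/- (Approximation guarantee of Theorem 5.1.) Under the setup of Algorithm 3 with true processing-time matrix t, predicted matrix t_hat, parameter gamma in [1, m], and prediction error eta >= 1 satisfying t(i,j) <= eta * t_hat(i,j) and t_hat(i,j) <= eta * t(i,j) for all i, j, the allocation a produced by Algorithm 3 under truthful bidding satisfies F(a, t) <= min( (1 + 2*gamma) * eta^2, m^3 / gamma^2 ) * MS(t). -/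
lemma mkspan_set_eq {m n : ℕ} (a : Fin n → Fin m) (t : Fin m → Fin n → ℝ) :
    {x : ℝ | ∃ i : Fin m, x = ∑ j : Fin n, if a j = i then t i j else 0} =
      Set.range (fun i : Fin m => ∑ j : Fin n, if a j = i then t i j else 0) := by
  ext x; simp [Set.range, eq_comm]

lemma load_le_mkspan_s14 {m n : ℕ} (a : Fin n → Fin m) (t : Fin m → Fin n → ℝ) (i : Fin m) :
    (∑ j : Fin n, if a j = i then t i j else 0) ≤ mkspan a t := by
  unfold mkspan; rw [mkspan_set_eq]
  exact le_csSup (Set.finite_range _).bddAbove ⟨i, rfl⟩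

lemma mkspan_le_s14 {m n : ℕ} (hm : 0 < m) (a : Fin n → Fin m) (t : Fin m → Fin n → ℝ) {B : ℝ}
    (h : ∀ i, (∑ j : Fin n, if a j = i then t i j else 0) ≤ B) : mkspan a t ≤ B := by
  refine csSup_le ⟨_, ⟨⟨0, hm⟩, rfl⟩⟩ ?_
  rintro x ⟨i, rfl⟩; exact h i

lemma optMS_set_eq {m n : ℕ} (t : Fin m → Fin n → ℝ) :
    {x : ℝ | ∃ a : Fin n → Fin m, x = mkspan a t} =
      Set.range (fun a : Fin n → Fin m => mkspan a t) := by
  ext x; simp [Set.range, eq_comm]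

lemma optMS_attained {m n : ℕ} (hm : 0 < m) (t : Fin m → Fin n → ℝ) :
    ∃ a : Fin n → Fin m, optMS t = mkspan a t := by
  have hne : (Set.range (fun a : Fin n → Fin m => mkspan a t)).Nonempty :=
    ⟨_, ⟨fun _ => ⟨0, hm⟩, rfl⟩⟩
  have := hne.csInf_mem (Set.finite_range _)
  rw [optMS, optMS_set_eq]
  obtain ⟨a, ha⟩ := this
  exact ⟨a, ha.symm⟩

-- total load sum
lemma sum_loads {m n : ℕ} (a : Fin n → Fin m) (t : Fin m → Fin n → ℝ) :
    ∑ j : Fin n, t (a j) j = ∑ i : Fin m, ∑ j : Fin n, if a j = i then t i j else 0 := by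
  rw [Finset.sum_comm]
  apply Finset.sum_congr rfl
  intro j _
  rw [Finset.sum_ite_eq Finset.univ (a j) (fun i => t i j)]
  simp

lemma sum_apply_le {m n : ℕ} (a : Fin n → Fin m) (t : Fin m → Fin n → ℝ) :
    ∑ j : Fin n, t (a j) j ≤ m * mkspan a t := by
  rw [sum_loads]
  calc ∑ i : Fin m, ∑ j : Fin n, (if a j = i then t i j else 0)
      ≤ ∑ _i : Fin m, mkspan a t := Finset.sum_le_sum (fun i _ => load_le_mkspan_s14 a t i)
    _ = m * mkspan a t := by simp [Finset.sum_const, mul_comm]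
set_option maxHeartbeats 1000000 in
/-- Approximation guarantee of Theorem 5.1: under the setup of Algorithm 3
with prediction error `η`, the allocation produced under truthful bidding
has makespan at most `min((1 + 2γ)η², m³/γ²)·MS(t)`. -/
theorem scheduling_approximation
    (m n : ℕ) (hm : 0 < m) (γ η : ℝ) (hγ1 : 1 ≤ γ) (hγm : γ ≤ m) (hη : 1 ≤ η)
    (t that : Fin m → Fin n → ℝ) (hthat : ∀ i j, 0 < that i j)
    -- prediction-error bounds
    (herr1 : ∀ i j, t i j ≤ η * that i j) (herr2 : ∀ i j, that i j ≤ η * t i j)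
    -- the rounded predicted matrix t̄
    (tbar : Fin m → Fin n → ℝ)
    (htbar : ∀ i j, tbar i j = min (that i j) ((m / γ) * ⨅ i' : Fin m, that i' j))
    -- ā is an optimal allocation for t̄
    (abar : Fin n → Fin m)
    (habar : ∀ a' : Fin n → Fin m, mkspan abar tbar ≤ mkspan a' tbar)
    -- the weight matrix of Algorithm 3
    (w : Fin m → Fin n → ℝ)
    -- greedy jobs: a machine l attaining the minimum predicted time gets weight γ/m
    (hw_greedy : ∀ j : Fin n, tbar (abar j) j < that (abar j) j →
      ∃ l : Fin m, (∀ i, that l j ≤ that i j) ∧ w l j = γ / m ∧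
        ∀ i, i ≠ l → w i j = 1)
    -- non-greedy jobs: machine ā(j) gets weight γ²/m²
    (hw_non : ∀ j : Fin n, ¬ tbar (abar j) j < that (abar j) j →
      w (abar j) j = γ ^ 2 / m ^ 2 ∧ ∀ i, i ≠ abar j → w i j = 1)
    -- under truthful bidding, each job goes to a machine minimizing the
    -- weighted processing time ...
    (a : Fin n → Fin m)
    (ha_min : ∀ (j : Fin n) (i : Fin m), w (a j) j * t (a j) j ≤ w i j * t i j)
    -- ... with ties broken in favor of the machine whose weight is below 1
    (ha_tie : ∀ (j : Fin n) (i : Fin m), w i j < 1 →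
      w i j * t i j ≤ w (a j) j * t (a j) j → a j = i) :
    mkspan a t ≤ min ((1 + 2 * γ) * η ^ 2) (m ^ 3 / γ ^ 2) * optMS t := by
  haveI : Nonempty (Fin m) := ⟨⟨0, hm⟩⟩
  have hm' : (0:ℝ) < m := by exact_mod_cast hm
  have hγ0 : (0:ℝ) < γ := lt_of_lt_of_le one_pos hγ1
  have hη0 : (0:ℝ) < η := lt_of_lt_of_le one_pos hη
  have hγm' : γ / m ≤ 1 := (div_le_one hm').mpr hγm
  have hγm0 : (0:ℝ) < γ / m := div_pos hγ0 hm'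
  have ht : ∀ i j, 0 < t i j := by
    intro i j; nlinarith [hthat i j, herr2 i j]
  -- infimum facts
  set μ : Fin n → ℝ := fun j => ⨅ i' : Fin m, that i' j with hμdef
  have hμ_le : ∀ i j, μ j ≤ that i j := fun i j =>
    ciInf_le (Set.finite_range _).bddBelow i
  have hμ_pos : ∀ j, 0 < μ j := by
    intro j
    obtain ⟨l, hl⟩ := Finite.exists_min (fun i => that i j)
    have he : μ j = that l j := le_antisymm (hμ_le l j) (le_ciInf hl)
    rw [he]; exact hthat l j
  have htbar_le : ∀ i j, tbar i j ≤ that i j := by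
    intro i j; rw [htbar]; exact min_le_left _ _
  have htbar_pos : ∀ i j, 0 < tbar i j := by
    intro i j; rw [htbar]
    exact lt_min (hthat i j) (mul_pos (div_pos hm' hγ0) (hμ_pos j))
  -- greedy characterization
  have hgr : ∀ j, tbar (abar j) j < that (abar j) j → tbar (abar j) j = (m / γ) * μ j := by
    intro j h
    rw [htbar] at h ⊢
    rcases min_lt_iff.mp h with h' | h'
    · exact absurd h' (lt_irrefl _)
    · exact min_eq_right h'.le
  -- weight bounds
  have hq1 : γ ^ 2 / m ^ 2 ≤ 1 := by
    rw [div_le_one (by positivity)]; nlinarith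
  have hq2 : γ ^ 2 / m ^ 2 ≤ γ / m := by
    rw [div_le_div_iff₀ (by positivity) hm']
    nlinarith [mul_nonneg (mul_nonneg hγ0.le hm'.le) (sub_nonneg.mpr hγm)]
  have hwb : ∀ i j, γ ^ 2 / m ^ 2 ≤ w i j ∧ w i j ≤ 1 := by
    intro i j
    by_cases hg : tbar (abar j) j < that (abar j) j
    · obtain ⟨l, _, hwl, hwo⟩ := hw_greedy j hg
      by_cases hi : i = l
      · subst hi; rw [hwl]; exact ⟨hq2, hγm'⟩
      · rw [hwo i hi]; exact ⟨hq1, le_refl 1⟩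
    · obtain ⟨hwk, hwo⟩ := hw_non j hg
      by_cases hi : i = abar j
      · subst hi; rw [hwk]; exact ⟨le_refl _, hq1⟩
      · rw [hwo i hi]; exact ⟨hq1, le_refl 1⟩
  -- per-job bound for robustness
  have key1 : ∀ j i, t (a j) j ≤ m ^ 2 / γ ^ 2 * t i j := by
    intro j i
    obtain ⟨hlo, _⟩ := hwb (a j) j
    obtain ⟨_, hhi⟩ := hwb i j
    have h1 := ha_min j i
    have h2 : w i j * t i j ≤ t i j := by nlinarith [ht i j]
    have h3 : γ ^ 2 / m ^ 2 * t (a j) j ≤ w (a j) j * t (a j) j := by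
      nlinarith [ht (a j) j]
    have h4 : γ ^ 2 / m ^ 2 * t (a j) j ≤ t i j := le_trans h3 (le_trans h1 h2)
    calc t (a j) j = m ^ 2 / γ ^ 2 * (γ ^ 2 / m ^ 2 * t (a j) j) := by
          field_simp
      _ ≤ m ^ 2 / γ ^ 2 * t i j := mul_le_mul_of_nonneg_left h4 (by positivity)
  -- per-job bound for consistency
  set D : Fin n → ℝ := fun j =>
    if a j = abar j ∧ ¬ tbar (abar j) j < that (abar j) j then tbar (abar j) j
    else γ / m * tbar (abar j) j with hDdef
  have key2 : ∀ j, t (a j) j ≤ η * D j := by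
    intro j
    by_cases hg : tbar (abar j) j < that (abar j) j
    · obtain ⟨l, hl, hwl, hwo⟩ := hw_greedy j hg
      have hDj : D j = γ / m * tbar (abar j) j := by
        rw [hDdef]; simp only
        rw [if_neg]; rintro ⟨_, h⟩; exact h hg
      have hμl : that l j = μ j := le_antisymm (le_ciInf hl) (hμ_le l j)
      have hgoal : γ / m * tbar (abar j) j = μ j := by
        rw [hgr j hg]; field_simp
      rw [hDj, hgoal]
      by_cases hal : a j = l
      · rw [hal]
        calc t l j ≤ η * that l j := herr1 l j
          _ = η * μ j := by rw [hμl]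
      · have hw1 : w (a j) j = 1 := hwo _ hal
        have h1 := ha_min j l
        rw [hw1, one_mul, hwl] at h1
        have h2 : t l j ≤ η * μ j := by rw [← hμl]; exact herr1 l j
        nlinarith [hμ_pos j, mul_le_mul_of_nonneg_left h2 hγm0.le,
          mul_le_mul_of_nonneg_right hγm' (mul_pos hη0 (hμ_pos j)).le]
    · obtain ⟨hwk, hwo⟩ := hw_non j hg
      have heq : tbar (abar j) j = that (abar j) j :=
        le_antisymm (htbar_le _ _) (not_lt.mp hg)
      by_cases hal : a j = abar j
      · have hDj : D j = tbar (abar j) j := by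
          rw [hDdef]; simp only; rw [if_pos ⟨hal, hg⟩]
        rw [hDj, heq, hal]; exact herr1 _ _
      · have hDj : D j = γ / m * tbar (abar j) j := by
          rw [hDdef]; simp only
          rw [if_neg]; rintro ⟨h, _⟩; exact hal h
        rw [hDj, heq]
        have hw1 : w (a j) j = 1 := hwo _ hal
        have h1 := ha_min j (abar j)
        rw [hw1, one_mul, hwk] at h1
        have h2 : t (abar j) j ≤ η * that (abar j) j := herr1 _ _
        nlinarith [mul_le_mul_of_nonneg_left h2 (by positivity : (0:ℝ) ≤ γ ^ 2 / m ^ 2),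
          mul_le_mul_of_nonneg_right hq2 (mul_pos hη0 (hthat (abar j) j)).le]
  -- nonnegativity of makespans
  have hload_nonneg : ∀ (a' : Fin n → Fin m) (t' : Fin m → Fin n → ℝ),
      (∀ i j, 0 ≤ t' i j) → ∀ i, 0 ≤ ∑ j : Fin n, if a' j = i then t' i j else 0 := by
    intro a' t' h i
    exact Finset.sum_nonneg fun j _ => by by_cases hc : a' j = i <;> simp [hc, h]
  have hmkB0 : 0 ≤ mkspan abar tbar :=
    le_trans (hload_nonneg abar tbar (fun i j => (htbar_pos i j).le) ⟨0, hm⟩)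
      (load_le_mkspan_s14 abar tbar ⟨0, hm⟩)
  -- total tbar load
  have hS : ∑ j : Fin n, tbar (abar j) j ≤ m * mkspan abar tbar := sum_apply_le abar tbar
  have hS0 : 0 ≤ ∑ j : Fin n, tbar (abar j) j :=
    Finset.sum_nonneg fun j _ => (htbar_pos _ _).le
  -- consistency machine bound
  have hmach : ∀ i, (∑ j : Fin n, if a j = i then t i j else 0)
      ≤ η * ((1 + γ) * mkspan abar tbar) := by
    intro i
    have step1 : (∑ j : Fin n, if a j = i then t i j else 0)
        ≤ ∑ j : Fin n, ((if abar j = i then η * tbar i j else 0)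
            + η * (γ / m * tbar (abar j) j)) := by
      apply Finset.sum_le_sum
      intro j _
      have hpos2 : 0 ≤ η * (γ / m * tbar (abar j) j) := by
        have := (htbar_pos (abar j) j).le; positivity
      have hpos1 : 0 ≤ (if abar j = i then η * tbar i j else 0) := by
        by_cases hc : abar j = i
        · rw [if_pos hc]; exact (mul_pos hη0 (htbar_pos i j)).le
        · rw [if_neg hc]
      by_cases hc : a j = i
      · rw [if_pos hc]
        have hk := key2 j
        rw [hc] at hk
        by_cases hd : a j = abar j ∧ ¬ tbar (abar j) j < that (abar j) j
        · have hDj : D j = tbar (abar j) j := by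
            rw [hDdef]; simp only; rw [if_pos hd]
          have habi : abar j = i := by rw [← hd.1, hc]
          rw [if_pos habi]
          rw [hDj, habi] at hk
          linarith
        · have hDj : D j = γ / m * tbar (abar j) j := by
            rw [hDdef]; simp only; rw [if_neg hd]
          rw [hDj] at hk
          linarith
      · rw [if_neg hc]
        linarith
    have step2 : (∑ j : Fin n, ((if abar j = i then η * tbar i j else 0)
            + η * (γ / m * tbar (abar j) j)))
        = η * (∑ j : Fin n, if abar j = i then tbar i j else 0)
          + η * (γ / m) * ∑ j : Fin n, tbar (abar j) j := by
      rw [Finset.sum_add_distrib]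
      congr 1
      · rw [Finset.mul_sum]
        apply Finset.sum_congr rfl
        intro j _
        by_cases hc : abar j = i <;> simp [hc]
      · rw [Finset.mul_sum]
        apply Finset.sum_congr rfl
        intro j _
        ring
    have h3 : η * (∑ j : Fin n, if abar j = i then tbar i j else 0)
        ≤ η * mkspan abar tbar :=
      mul_le_mul_of_nonneg_left (load_le_mkspan_s14 abar tbar i) hη0.le
    have h4 : η * (γ / m) * ∑ j : Fin n, tbar (abar j) j
        ≤ η * (γ / m) * (m * mkspan abar tbar) :=
      mul_le_mul_of_nonneg_left hS (by positivity)
    have h5 : η * (γ / m) * (m * mkspan abar tbar) = η * γ * mkspan abar tbar := by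
      field_simp
    calc (∑ j : Fin n, if a j = i then t i j else 0)
        ≤ _ := step1
      _ = _ := step2
      _ ≤ η * mkspan abar tbar + η * γ * mkspan abar tbar := by
          rw [← h5]; exact add_le_add h3 h4
      _ = η * ((1 + γ) * mkspan abar tbar) := by ring
  have hb2' : mkspan a t ≤ η * ((1 + γ) * mkspan abar tbar) := mkspan_le_s14 hm a t hmach
  -- optimal allocation
  obtain ⟨astar, hastar⟩ := optMS_attained hm t
  have hopt0 : 0 ≤ optMS t := by
    rw [hastar]
    exact le_trans (hload_nonneg astar t (fun i j => (ht i j).le) ⟨0, hm⟩)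
      (load_le_mkspan_s14 astar t ⟨0, hm⟩)
  -- chain : mkspan abar tbar ≤ η * optMS t
  have hchain : mkspan abar tbar ≤ η * optMS t := by
    have h1 : mkspan abar tbar ≤ mkspan astar tbar := habar astar
    have h2 : mkspan astar tbar ≤ mkspan astar that := by
      apply mkspan_le_s14 hm
      intro i
      calc (∑ j : Fin n, if astar j = i then tbar i j else 0)
          ≤ ∑ j : Fin n, if astar j = i then that i j else 0 :=
            Finset.sum_le_sum fun j _ => by
              by_cases hc : astar j = i <;> simp [hc, htbar_le]
        _ ≤ mkspan astar that := load_le_mkspan_s14 _ _ _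
    have h3 : mkspan astar that ≤ η * mkspan astar t := by
      apply mkspan_le_s14 hm
      intro i
      calc (∑ j : Fin n, if astar j = i then that i j else 0)
          ≤ ∑ j : Fin n, if astar j = i then η * t i j else 0 :=
            Finset.sum_le_sum fun j _ => by
              by_cases hc : astar j = i
              · simpa [hc] using herr2 i j
              · simp [hc]
        _ = η * ∑ j : Fin n, if astar j = i then t i j else 0 := by
            rw [Finset.mul_sum]
            apply Finset.sum_congr rfl
            intro j _
            by_cases hc : astar j = i <;> simp [hc]
        _ ≤ η * mkspan astar t :=
            mul_le_mul_of_nonneg_left (load_le_mkspan_s14 _ _ _) hη0.le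
    calc mkspan abar tbar ≤ mkspan astar tbar := h1
      _ ≤ mkspan astar that := h2
      _ ≤ η * mkspan astar t := h3
      _ = η * optMS t := by rw [hastar]
  -- consistency bound
  have hb2 : mkspan a t ≤ (1 + 2 * γ) * η ^ 2 * optMS t := by
    have h6 : η * ((1 + γ) * mkspan abar tbar) ≤ η * ((1 + γ) * (η * optMS t)) := by
      apply mul_le_mul_of_nonneg_left _ hη0.le
      exact mul_le_mul_of_nonneg_left hchain (by positivity)
    have h7 : η * ((1 + γ) * (η * optMS t)) ≤ (1 + 2 * γ) * η ^ 2 * optMS t := by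
      nlinarith [mul_nonneg hγ0.le (mul_nonneg (mul_nonneg hη0.le hη0.le) hopt0)]
    linarith
  -- robustness bound
  have hb1 : mkspan a t ≤ m ^ 3 / γ ^ 2 * optMS t := by
    apply mkspan_le_s14 hm
    intro i
    calc (∑ j : Fin n, if a j = i then t i j else 0)
        ≤ ∑ j : Fin n, m ^ 2 / γ ^ 2 * t (astar j) j := by
          apply Finset.sum_le_sum
          intro j _
          by_cases hc : a j = i
          · rw [if_pos hc, ← hc]; exact key1 j (astar j)
          · rw [if_neg hc]
            exact mul_nonneg (by positivity) (ht _ _).le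
      _ = m ^ 2 / γ ^ 2 * ∑ j : Fin n, t (astar j) j := by rw [Finset.mul_sum]
      _ ≤ m ^ 2 / γ ^ 2 * (m * mkspan astar t) :=
          mul_le_mul_of_nonneg_left (sum_apply_le astar t) (by positivity)
      _ = m ^ 3 / γ ^ 2 * mkspan astar t := by ring
      _ = m ^ 3 / γ ^ 2 * optMS t := by rw [hastar]
  rw [min_mul_of_nonneg _ _ hopt0]
  exact le_min hb2 hb1
end
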